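/- arXiv:0901.0323 — 5 statements merged into one kernel-verified Lean document; each statement's English description precedes it below -/
import Mathlib

section
/- If ρ_i = (a)_i ζ^i / i! for i ≥ 0 (where (a)_i = a(a+1)⋯(a+i-1) is the Pochhammer symbol) and ρ_i = 1 for i ≤ -1, then for any partition λ with ℓ(λ) ≤ N, ∏_{i=1}^{N} ρ_{λ_i - i + N} = (∏_{i=0}^{N-1} (a)_i/i!) · ζ^{|λ| + N(N-1)/2} · (a-1+N)_λ / (N)_λ, where (x)_λ := ∏_{(i,j)∈λ}(x - i + j). -/
open Finset

private lemma fact_cast_aux (n k : ℕ) :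
    (((n + k).factorial : ℂ)) = (n.factorial : ℂ) * ∏ j ∈ range k, ((n : ℂ) + 1 + j) := by
  induction k with
  | zero => simp
  | succ k ih =>
    rw [← add_assoc, Nat.factorial_succ, prod_range_succ]
    push_cast
    rw [ih]
    ring

/-- For `ρ_i = (a)_i ζ^i / i!` (`i ≥ 0`), `ρ_i = 1` (`i ≤ -1`), and a partition `λ`
with `ℓ(λ) ≤ N`:
`∏_{i=1}^N ρ_{λ_i-i+N} = (∏_{i=0}^{N-1} (a)_i/i!) · ζ^{|λ| + N(N-1)/2} · (a-1+N)_λ/(N)_λ`,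
where `(x)_λ = ∏_{(i,j)∈λ}(x - i + j)` is the extended Pochhammer symbol. -/
theorem stmt3 (N ℓ : ℕ) (lam : ℕ → ℕ) (hanti : Antitone lam)
    (hsupp : ∀ i, 0 < lam i ↔ i < ℓ) (hℓN : ℓ ≤ N) (a ζ : ℂ)
    (ρ : ℤ → ℂ)
    (hρpos : ∀ n : ℕ,
      ρ n = (∏ j ∈ range n, (a + (j : ℂ))) * ζ ^ n / (Nat.factorial n : ℂ))
    (hρneg : ∀ i : ℤ, i < 0 → ρ i = 1) :
    (∏ i ∈ range N, ρ ((lam i : ℤ) + (N : ℤ) - ((i : ℤ) + 1))) =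
      (∏ i ∈ range N, (∏ j ∈ range i, (a + (j : ℂ))) / (Nat.factorial i : ℂ)) *
        ζ ^ ((∑ i ∈ range ℓ, lam i) + N * (N - 1) / 2) *
        (∏ i ∈ range ℓ, ∏ j ∈ range (lam i),
          (a - 1 + (N : ℂ) - ((i : ℂ) + 1) + ((j : ℂ) + 1))) /
        (∏ i ∈ range ℓ, ∏ j ∈ range (lam i),
          ((N : ℂ) - ((i : ℂ) + 1) + ((j : ℂ) + 1))) := by
  have hlam0 : ∀ i, ℓ ≤ i → lam i = 0 := fun i h =>
    Nat.eq_zero_of_not_pos (fun hp => absurd ((hsupp i).1 hp) (not_lt.2 h))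
  -- step 1: rewrite each factor of the LHS
  have key : ∀ i ∈ range N, ρ ((lam i : ℤ) + (N : ℤ) - ((i : ℤ) + 1)) =
      ((∏ j ∈ range (N - (i+1)), (a + (j : ℂ))) * ζ ^ (N - (i+1)) /
          ((N - (i+1)).factorial : ℂ)) *
      ((∏ j ∈ range (lam i), (a + ((N - (i+1) : ℕ) : ℂ) + j)) * ζ ^ (lam i) /
        (∏ j ∈ range (lam i), (((N - (i+1) : ℕ) : ℂ) + 1 + j))) := by
    intro i hi
    rw [mem_range] at hi
    have hi' : i + 1 ≤ N := hi
    have harg : (lam i : ℤ) + (N : ℤ) - ((i : ℤ) + 1) = ((N - (i+1) + lam i : ℕ) : ℤ) := by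
      push_cast [Nat.cast_sub hi']
      ring
    rw [harg, hρpos, prod_range_add, pow_add, fact_cast_aux]
    have hcast : ∀ j : ℕ, (a + ((N - (i+1) + j : ℕ) : ℂ)) = a + ((N - (i+1) : ℕ) : ℂ) + j := by
      intro j; push_cast; ring
    rw [prod_congr rfl fun j _ => hcast j]
    ring
  rw [prod_congr rfl key, prod_mul_distrib]
  -- first product
  have h1 : (∏ i ∈ range N, ((∏ j ∈ range (N - (i+1)), (a + (j : ℂ))) * ζ ^ (N - (i+1)) /
        ((N - (i+1)).factorial : ℂ))) =
      (∏ i ∈ range N, (∏ j ∈ range i, (a + (j : ℂ))) / (Nat.factorial i : ℂ)) *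
        ζ ^ (N * (N - 1) / 2) := by
    have hrefl : (∏ i ∈ range N, ((∏ j ∈ range (N - (i+1)), (a + (j : ℂ))) * ζ ^ (N - (i+1)) /
          ((N - (i+1)).factorial : ℂ))) =
        ∏ i ∈ range N, ((∏ j ∈ range i, (a + (j : ℂ))) * ζ ^ i / (Nat.factorial i : ℂ)) := by
      rw [← prod_range_reflect fun i => ((∏ j ∈ range i, (a + (j : ℂ))) * ζ ^ i /
          (Nat.factorial i : ℂ))]
      refine prod_congr rfl fun i hi => ?_
      have : N - 1 - i = N - (i + 1) := by omega
      rw [this]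
    rw [hrefl]
    calc (∏ i ∈ range N, ((∏ j ∈ range i, (a + (j : ℂ))) * ζ ^ i / (Nat.factorial i : ℂ)))
        = ∏ i ∈ range N, (((∏ j ∈ range i, (a + (j : ℂ))) / (Nat.factorial i : ℂ)) * ζ ^ i) := by
          exact prod_congr rfl fun i _ => by ring
      _ = (∏ i ∈ range N, (∏ j ∈ range i, (a + (j : ℂ))) / (Nat.factorial i : ℂ)) *
            ζ ^ (∑ i ∈ range N, i) := by
          rw [prod_mul_distrib, prod_pow_eq_pow_sum]
      _ = _ := by rw [Finset.sum_range_id]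
  rw [h1]
  -- second product
  have h2 : (∏ i ∈ range N, ((∏ j ∈ range (lam i), (a + ((N - (i+1) : ℕ) : ℂ) + j)) * ζ ^ (lam i) /
        (∏ j ∈ range (lam i), (((N - (i+1) : ℕ) : ℂ) + 1 + j)))) =
      ((∏ i ∈ range ℓ, ∏ j ∈ range (lam i),
          (a - 1 + (N : ℂ) - ((i : ℂ) + 1) + ((j : ℂ) + 1))) /
        (∏ i ∈ range ℓ, ∏ j ∈ range (lam i),
          ((N : ℂ) - ((i : ℂ) + 1) + ((j : ℂ) + 1)))) * ζ ^ (∑ i ∈ range ℓ, lam i) := by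
    calc (∏ i ∈ range N, ((∏ j ∈ range (lam i), (a + ((N - (i+1) : ℕ) : ℂ) + j)) * ζ ^ (lam i) /
          (∏ j ∈ range (lam i), (((N - (i+1) : ℕ) : ℂ) + 1 + j))))
        = ∏ i ∈ range N, (((∏ j ∈ range (lam i), (a + ((N - (i+1) : ℕ) : ℂ) + j)) /
            (∏ j ∈ range (lam i), (((N - (i+1) : ℕ) : ℂ) + 1 + j))) * ζ ^ (lam i)) := by
          exact prod_congr rfl fun i _ => by ring
      _ = (∏ i ∈ range N, ((∏ j ∈ range (lam i), (a + ((N - (i+1) : ℕ) : ℂ) + j)) /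
            (∏ j ∈ range (lam i), (((N - (i+1) : ℕ) : ℂ) + 1 + j)))) *
            ζ ^ (∑ i ∈ range N, lam i) := by
          rw [prod_mul_distrib, prod_pow_eq_pow_sum]
      _ = _ := by
          have hsum : (∑ i ∈ range N, lam i) = ∑ i ∈ range ℓ, lam i := by
            refine (sum_subset (range_subset_range.2 hℓN) ?_).symm
            intro i _ hi
            exact hlam0 i (by simpa using hi)
          have hprod : (∏ i ∈ range N, ((∏ j ∈ range (lam i), (a + ((N - (i+1) : ℕ) : ℂ) + j)) /
              (∏ j ∈ range (lam i), (((N - (i+1) : ℕ) : ℂ) + 1 + j)))) =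
              ∏ i ∈ range ℓ, ((∏ j ∈ range (lam i), (a + ((N - (i+1) : ℕ) : ℂ) + j)) /
              (∏ j ∈ range (lam i), (((N - (i+1) : ℕ) : ℂ) + 1 + j))) := by
            refine (prod_subset (range_subset_range.2 hℓN) ?_).symm
            intro i _ hi
            rw [hlam0 i (by simpa using hi)]
            simp
          rw [hsum, hprod, prod_div_distrib]
          congr 1
          congr 1
          · refine prod_congr rfl fun i hi => prod_congr rfl fun j _ => ?_
            rw [mem_range] at hi
            have hi' : i + 1 ≤ N := le_trans hi hℓN
            rw [Nat.cast_sub hi']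
            push_cast
            ring
          · refine prod_congr rfl fun i hi => prod_congr rfl fun j _ => ?_
            rw [mem_range] at hi
            have hi' : i + 1 ≤ N := le_trans hi hℓN
            rw [Nat.cast_sub hi']
            push_cast
            ring
  rw [h2, pow_add]
  ring
end

section
/- Let ρ_+(z) = Σ_{i≥0} ρ_i z^i be a formal power series with nonzero coefficients, and let a_1,…,a_N, b_1,…,b_N be complex numbers (with the a_i pairwise distinct and b_i pairwise distinct, all in the domain of convergence). Then Σ_{ℓ(λ)≤N} (∏_{i=1}^{N} ρ_{λ_i - i + N}) s_λ(a_1,…,a_N) s_λ(b_1,…,b_N) = det(ρ_+(a_i b_j))_{1≤i,j≤N} / (Δ(a)Δ(b)), where Δ denotes the Vandermonde determinant ∏_{i<j}(a_i - a_j). -/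
open Finset

def Kf (N : ℕ) (f : Fin N → ℕ) : Fin N → ℕ := fun t => f t + (N - 1 - (t : ℕ))

lemma gap_lemma {N : ℕ} {k : Fin N → ℕ} (hk : StrictAnti k) :
    ∀ (d : ℕ) (t t' : Fin N), (t' : ℕ) = (t : ℕ) + d → k t' + d ≤ k t := by
  intro d
  induction d with
  | zero =>
    intro t t' h
    have : t' = t := Fin.ext (by omega)
    simp [this]
  | succ n ih =>
    intro t t' h
    have h1 : (t : ℕ) + n < N := by have := t'.isLt; omega
    have h2 := ih t ⟨(t : ℕ) + n, h1⟩ rfl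
    have h3 : (⟨(t : ℕ) + n, h1⟩ : Fin N) < t' := by
      rw [Fin.lt_def]; simp; omega
    have h4 := hk h3
    omega

lemma kf_strictAnti {N : ℕ} {f : Fin N → ℕ} (hf : Antitone f) : StrictAnti (Kf N f) := by
  intro t t' ht
  have h1 : f t' ≤ f t := hf ht.le
  have h2 : (t : ℕ) < (t' : ℕ) := ht
  have h3 := t'.isLt
  simp only [Kf]
  omega

lemma strictAnti_ge {N : ℕ} {k : Fin N → ℕ} (hk : StrictAnti k) (t : Fin N) :
    N - 1 - (t : ℕ) ≤ k t := by
  have hN : N - 1 < N := by have := t.isLt; omega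
  have := gap_lemma hk (N - 1 - (t : ℕ)) t ⟨N - 1, hN⟩ (by simp; have := t.isLt; omega)
  omega

lemma antitone_sub {N : ℕ} {k : Fin N → ℕ} (hk : StrictAnti k) :
    Antitone (fun t : Fin N => k t - (N - 1 - (t : ℕ))) := by
  intro t t' htt'
  rcases eq_or_lt_of_le htt' with h | h
  · subst h; exact le_rfl
  · have h2 : (t : ℕ) < (t' : ℕ) := h
    have h3 := t'.isLt
    have := gap_lemma hk ((t' : ℕ) - (t : ℕ)) t t' (by omega)
    simp only
    omega

lemma kf_sub {N : ℕ} {k : Fin N → ℕ} (hk : StrictAnti k) :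
    Kf N (fun t => k t - (N - 1 - (t : ℕ))) = k := by
  funext t
  have := strictAnti_ge hk t
  simp only [Kf]
  omega

lemma key {N M : ℕ} (ρ : ℕ → ℂ) (a b : Fin N → ℂ)
    (s : Finset {f : Fin N → ℕ // Antitone f})
    (hsmem : ∀ lam : {f : Fin N → ℕ // Antitone f},
      lam ∈ s ↔ ∀ t : Fin N, Kf N lam.1 t < M)
    (hKsa : ∀ lam : {f : Fin N → ℕ // Antitone f}, StrictAnti (Kf N lam.1))
    (hsub : ∀ k : Fin N → ℕ, StrictAnti k →
      Antitone (fun t : Fin N => k t - (N - 1 - (t : ℕ))))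
    (hksub : ∀ k : Fin N → ℕ, StrictAnti k →
      Kf N (fun t => k t - (N - 1 - (t : ℕ))) = k) :
    Matrix.det (Matrix.of fun i j : Fin N => ∑ k ∈ range M, ρ k * (a i * b j) ^ k) =
      ∑ lam ∈ s, (∏ t : Fin N, ρ (Kf N lam.1 t)) *
        Matrix.det (Matrix.of fun i j : Fin N => a i ^ (Kf N lam.1 j)) *
        Matrix.det (Matrix.of fun i j : Fin N => b i ^ (Kf N lam.1 j)) := by
  classical
  -- Step 1: multilinearity in rows
  have h1 : (Matrix.of fun i j : Fin N => ∑ k ∈ range M, ρ k * (a i * b j) ^ k)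
      = fun i => ∑ k ∈ range M, (fun j => (a i ^ k * ρ k) * b j ^ k) := by
    funext i
    rw [Finset.sum_fn]
    funext j
    simp only [Matrix.of_apply]
    exact Finset.sum_congr rfl fun k _ => by rw [mul_pow]; ring
  have step1 : Matrix.det (Matrix.of fun i j : Fin N => ∑ k ∈ range M, ρ k * (a i * b j) ^ k)
      = ∑ r ∈ Fintype.piFinset (fun _ : Fin N => range M),
          Matrix.det (Matrix.of fun i j : Fin N => (a i ^ r i * ρ (r i)) * b j ^ r i) := by
    rw [h1]
    exact (Matrix.detRowAlternating :
      ((Fin N) → ℂ) [⋀^(Fin N)]→ₗ[ℂ] ℂ).toMultilinearMap.map_sum_finset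
      (fun i k => fun j => (a i ^ k * ρ k) * b j ^ k) (fun _ => range M)
  rw [step1]
  -- Step 2: pull out row scalars
  have step2 : ∀ r : Fin N → ℕ,
      Matrix.det (Matrix.of fun i j : Fin N => (a i ^ r i * ρ (r i)) * b j ^ r i)
        = (∏ i, a i ^ r i * ρ (r i)) * Matrix.det (Matrix.of fun i j : Fin N => b j ^ r i) :=
    fun r => Matrix.det_mul_column (fun i => a i ^ r i * ρ (r i)) _
  simp only [step2]
  -- Step 3: restrict to injective r
  rw [← Finset.sum_filter_of_ne (s := Fintype.piFinset (fun _ : Fin N => range M))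
    (p := fun r => Function.Injective r)
    (fun r _ hne => by
      by_contra hni
      apply hne
      simp only [Function.Injective, not_forall] at hni
      obtain ⟨i, i', hrii, hne'⟩ := hni
      have : Matrix.det (Matrix.of fun i j : Fin N => b j ^ r i) = 0 :=
        Matrix.det_zero_of_row_eq hne' (funext fun j => by simp [hrii])
      rw [this, mul_zero])]
  -- Step 4: bijection with pairs (lam, σ)
  have step4 : ∑ r ∈ (Fintype.piFinset (fun _ : Fin N => range M)).filter
        (fun r => Function.Injective r),
        (∏ i, a i ^ r i * ρ (r i)) * Matrix.det (Matrix.of fun i j : Fin N => b j ^ r i)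
      = ∑ p ∈ s ×ˢ (Finset.univ : Finset (Equiv.Perm (Fin N))),
          ((Equiv.Perm.sign p.2 : ℤ) : ℂ) * ((∏ i, a (p.2 i) ^ Kf N p.1.1 i) *
            ((∏ t, ρ (Kf N p.1.1 t)) *
              Matrix.det (Matrix.of fun i j : Fin N => b j ^ Kf N p.1.1 i))) := by
    refine (Finset.sum_bij (fun p _ => fun x => Kf N p.1.1 (p.2⁻¹ x)) ?_ ?_ ?_ ?_).symm
    · -- maps into target
      rintro ⟨lam, σ⟩ hp
      rw [Finset.mem_product] at hp
      have hlt := (hsmem lam).1 hp.1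
      rw [Finset.mem_filter]
      constructor
      · rw [Fintype.mem_piFinset]
        intro x
        exact Finset.mem_range.mpr (hlt _)
      · exact ((hKsa lam).injective).comp (Equiv.injective _)
    · -- injectivity
      rintro ⟨lam₁, σ₁⟩ h₁ ⟨lam₂, σ₂⟩ h₂ heq
      have hK1 := hKsa lam₁
      have hK2 := hKsa lam₂
      set π : Equiv.Perm (Fin N) := σ₂⁻¹ * σ₁ with hπ
      have hππ : ∀ t, Kf N lam₁.1 t = Kf N lam₂.1 (π t) := by
        intro t
        have := congrFun heq (σ₁ t)
        simpa [hπ] using this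
      have hπmono : StrictMono (⇑π) := by
        intro t t' htt'
        have : Kf N lam₂.1 (π t') < Kf N lam₂.1 (π t) := by
          rw [← hππ, ← hππ]; exact hK1 htt'
        exact (hK2.lt_iff_gt).mp this
      have hπid : (⇑π) = id := by
        apply (StrictMono.range_inj hπmono strictMono_id).mp
        rw [π.surjective.range_eq, Set.range_id]
      have hσ : σ₁ = σ₂ := by
        have : π = 1 := Equiv.ext fun x => congrFun hπid x
        rw [hπ] at this
        exact (inv_mul_eq_one.mp this).symm
      have hlam : lam₁ = lam₂ := by
        apply Subtype.ext
        funext t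
        have := hππ t
        rw [hπid] at this
        simp only [Kf, id_eq] at this
        omega
      rw [hσ, hlam]
    · -- surjectivity
      intro r hr
      rw [Finset.mem_filter, Fintype.mem_piFinset] at hr
      obtain ⟨hr1, hr2⟩ := hr
      set σ₀ := Tuple.sort r with hσ₀
      have hsm : StrictMono (r ∘ σ₀) :=
        (Tuple.monotone_sort r).strictMono_of_injective (hr2.comp σ₀.injective)
      set τ : Equiv.Perm (Fin N) := Fin.revPerm.trans σ₀ with hτ
      set k : Fin N → ℕ := fun t => r (σ₀ t.rev) with hk
      have hksa : StrictAnti k := by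
        intro t t' htt'
        exact hsm (Fin.rev_lt_rev.mpr htt')
      set lam : Fin N → ℕ := fun t => k t - (N - 1 - (t : ℕ)) with hlam
      have hKk : Kf N lam = k := hksub k hksa
      refine ⟨⟨⟨lam, hsub k hksa⟩, τ⟩, ?_, ?_⟩
      · rw [Finset.mem_product]
        refine ⟨(hsmem _).2 ?_, Finset.mem_univ _⟩
        intro t
        rw [hKk]
        exact Finset.mem_range.mp (hr1 _)
      · funext x
        simp only [hKk]
        show k (τ⁻¹ x) = r x
        show r (σ₀ (τ⁻¹ x).rev) = r x
        have happ : τ (τ⁻¹ x) = x := Equiv.apply_symm_apply τ x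
        calc r (σ₀ (τ⁻¹ x).rev) = r (τ (τ⁻¹ x)) := rfl
          _ = r x := by rw [happ]
    · -- value equality
      rintro ⟨lam, σ⟩ hp
      simp only
      have e1 : (∏ i, a i ^ (Kf N lam.1 (σ⁻¹ i)) * ρ (Kf N lam.1 (σ⁻¹ i)))
          = (∏ i, a i ^ (Kf N lam.1 (σ⁻¹ i))) * ∏ i, ρ (Kf N lam.1 (σ⁻¹ i)) :=
        Finset.prod_mul_distrib
      have e2 : (∏ i, ρ (Kf N lam.1 (σ⁻¹ i))) = ∏ t, ρ (Kf N lam.1 t) :=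
        Equiv.prod_comp σ⁻¹ (fun i => ρ (Kf N lam.1 i))
      have e3 : (∏ i, a i ^ (Kf N lam.1 (σ⁻¹ i))) = ∏ i, a (σ i) ^ Kf N lam.1 i := by
        rw [← Equiv.prod_comp σ (fun i => a i ^ Kf N lam.1 (σ⁻¹ i))]
        exact Finset.prod_congr rfl fun i _ => by rw [show σ⁻¹ (σ i) = i from Equiv.symm_apply_apply σ i]
      have e4 : Matrix.det (Matrix.of fun i j : Fin N => b j ^ Kf N lam.1 (σ⁻¹ i))
          = ((Equiv.Perm.sign σ : ℤ) : ℂ) *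
            Matrix.det (Matrix.of fun i j : Fin N => b j ^ Kf N lam.1 i) := by
        have : (Matrix.of fun i j : Fin N => b j ^ Kf N lam.1 (σ⁻¹ i))
            = (Matrix.of fun i j : Fin N => b j ^ Kf N lam.1 i).submatrix (⇑σ⁻¹) id := by
          ext i j; simp [Matrix.submatrix_apply]
        rw [this, Matrix.det_permute, Equiv.Perm.sign_inv]
        try (push_cast; ring)
      rw [e1, e2, e3, e4]
      ring
  rw [step4, Finset.sum_product]
  refine Finset.sum_congr rfl fun lam _ => ?_
  -- inner sum over permutations is the a-determinant
  have inner : ∑ σ : Equiv.Perm (Fin N),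
      ((Equiv.Perm.sign σ : ℤ) : ℂ) * ((∏ i, a (σ i) ^ Kf N lam.1 i) *
        ((∏ t, ρ (Kf N lam.1 t)) *
          Matrix.det (Matrix.of fun i j : Fin N => b j ^ Kf N lam.1 i)))
      = Matrix.det (Matrix.of fun i j : Fin N => a i ^ Kf N lam.1 j) *
        ((∏ t, ρ (Kf N lam.1 t)) *
          Matrix.det (Matrix.of fun i j : Fin N => b j ^ Kf N lam.1 i)) := by
    rw [Matrix.det_apply' (Matrix.of fun i j : Fin N => a i ^ Kf N lam.1 j),
      Finset.sum_mul]
    refine Finset.sum_congr rfl fun σ _ => ?_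
    simp only [Matrix.of_apply]
    ring
  rw [inner]
  have etr : Matrix.det (Matrix.of fun i j : Fin N => b j ^ Kf N lam.1 i)
      = Matrix.det (Matrix.of fun i j : Fin N => b i ^ Kf N lam.1 j) := by
    have htr : Matrix.transpose (Matrix.of fun i j : Fin N => b i ^ Kf N lam.1 j)
        = (Matrix.of fun i j : Fin N => b j ^ Kf N lam.1 i) := by
      ext i j
      simp [Matrix.transpose_apply]
    rw [← htr, Matrix.det_transpose]
  rw [etr]
  ring

/-- For `ρ_+(z) = Σ_{k<M} ρ_k z^k` with nonzero coefficients and distinct `a_i`, `b_j`: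
`Σ_{ℓ(λ)≤N} (∏_{i=1}^N ρ_{λ_i-i+N}) s_λ(a) s_λ(b) = det(ρ_+(a_i b_j))/(Δ(a)Δ(b))`,
where `s_λ` is given by the bialternant formula and `Δ` is the Vandermonde
determinant `∏_{i<j}(a_i - a_j)`. -/
theorem stmt5 (N M : ℕ) (ρ : ℕ → ℂ) (hρne : ∀ k, k < M → ρ k ≠ 0)
    (hsupp : ∀ k, M ≤ k → ρ k = 0) (a b : Fin N → ℂ)
    (ha : Function.Injective a) (hb : Function.Injective b) :
    (∑' lam : {f : Fin N → ℕ // Antitone f},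
        (∏ t : Fin N, ρ (lam.1 t + (N - 1 - (t : ℕ)))) *
          (Matrix.det (Matrix.of fun i j : Fin N => a i ^ (lam.1 j + (N - 1 - (j : ℕ)))) /
            ∏ i : Fin N, ∏ j ∈ Finset.univ.filter (fun j => i < j), (a i - a j)) *
          (Matrix.det (Matrix.of fun i j : Fin N => b i ^ (lam.1 j + (N - 1 - (j : ℕ)))) /
            ∏ i : Fin N, ∏ j ∈ Finset.univ.filter (fun j => i < j), (b i - b j))) =
      Matrix.det (Matrix.of fun i j : Fin N => ∑ k ∈ range M, ρ k * (a i * b j) ^ k) /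
        ((∏ i : Fin N, ∏ j ∈ Finset.univ.filter (fun j => i < j), (a i - a j)) *
          ∏ i : Fin N, ∏ j ∈ Finset.univ.filter (fun j => i < j), (b i - b j)) := by
  classical
  set Da := ∏ i : Fin N, ∏ j ∈ Finset.univ.filter (fun j => i < j), (a i - a j) with hDa
  set Db := ∏ i : Fin N, ∏ j ∈ Finset.univ.filter (fun j => i < j), (b i - b j) with hDb
  -- the finite support set
  set emb : (Fin N → Fin M) → {f : Fin N → ℕ // Antitone f} := fun g =>
    if h : Antitone (fun t => (g t : ℕ)) then ⟨_, h⟩ else ⟨fun _ => 0, antitone_const⟩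
    with hembdef
  set s : Finset {f : Fin N → ℕ // Antitone f} :=
    (Finset.univ.image emb).filter (fun lam => ∀ t, Kf N lam.1 t < M) with hsdef
  have hsmem : ∀ lam : {f : Fin N → ℕ // Antitone f},
      lam ∈ s ↔ ∀ t : Fin N, Kf N lam.1 t < M := by
    intro lam
    rw [hsdef, Finset.mem_filter]
    constructor
    · exact fun h => h.2
    · intro hlt
      refine ⟨Finset.mem_image.mpr ⟨fun t => ⟨lam.1 t,
        lt_of_le_of_lt (Nat.le_add_right _ _) (hlt t)⟩, Finset.mem_univ _, ?_⟩, hlt⟩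
      rw [hembdef]
      simp only
      rw [dif_pos (show Antitone (fun t : Fin N =>
        ((⟨lam.1 t, lt_of_le_of_lt (Nat.le_add_right _ _) (hlt t)⟩ : Fin M) : ℕ)) from lam.2)]
  -- replace the tsum by a finite sum
  rw [tsum_eq_sum (s := s) (by
    intro lam hlam
    rw [hsmem] at hlam
    push_neg at hlam
    obtain ⟨t, ht⟩ := hlam
    have hz : ρ (lam.1 t + (N - 1 - (t : ℕ))) = 0 := hsupp _ ht
    rw [Finset.prod_eq_zero (Finset.mem_univ t) hz, zero_mul, zero_mul])]
  -- key determinant identity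
  rw [key ρ a b s hsmem (fun lam => kf_strictAnti lam.2) (fun k hk => antitone_sub hk)
    (fun k hk => kf_sub hk)]
  rw [Finset.sum_div]
  refine Finset.sum_congr rfl fun lam _ => ?_
  show (∏ t : Fin N, ρ (Kf N lam.1 t)) *
      (Matrix.det (Matrix.of fun i j : Fin N => a i ^ Kf N lam.1 j) / Da) *
      (Matrix.det (Matrix.of fun i j : Fin N => b i ^ Kf N lam.1 j) / Db) =
    (∏ t : Fin N, ρ (Kf N lam.1 t)) *
      Matrix.det (Matrix.of fun i j : Fin N => a i ^ Kf N lam.1 j) *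
      Matrix.det (Matrix.of fun i j : Fin N => b i ^ Kf N lam.1 j) / (Da * Db)
  ring
end

section
/- For pairwise distinct complex numbers a_1,…,a_N and b_1,…,b_N: Σ_{ℓ(λ)≤N} (1/(N)_λ) s_λ(a) s_λ(b) = (∏_{k=1}^{N-1} k!) · det(e^{a_i b_j})_{1≤i,j≤N} / (Δ(a)Δ(b)), where (N)_λ = ∏_{(i,j)∈λ}(N-i+j) and Δ is the Vandermonde determinant. -/
open Finset Matrix

noncomputable section AuxStmt6

lemma cexp_tsum (z : ℂ) : Complex.exp z = ∑' n : ℕ, z ^ n / (n.factorial : ℂ) := by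
  rw [Complex.exp_eq_exp_ℂ, NormedSpace.exp_eq_tsum_div]

lemma cexp_norm_summable (z : ℂ) : Summable fun n : ℕ => ‖z ^ n / (n.factorial : ℂ)‖ := by
  simpa [norm_div, norm_pow] using Real.summable_pow_div_factorial ‖z‖

instance instUniqueFinZeroPiStmt6 : Unique (Fin 0 → ℕ) :=
  ⟨⟨fun i => i.elim0⟩, fun _ => funext fun i => i.elim0⟩

lemma pi_norm_summable : ∀ {n : ℕ} (h : Fin n → ℕ → ℂ),
    (∀ j, Summable fun k => ‖h j k‖) →
    Summable fun m : Fin n → ℕ => ∏ j, ‖h j (m j)‖ := by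
  intro n
  induction n with
  | zero => intro h hs; exact .of_finite
  | succ n ih =>
    intro h hs
    have key : ∀ p : ℕ × (Fin n → ℕ),
        (∏ j, ‖h j ((Fin.consEquiv (fun _ : Fin (n+1) => ℕ)) p j)‖) =
          ‖h 0 p.1‖ * ∏ j, ‖h j.succ (p.2 j)‖ := by
      intro p
      rw [Fin.prod_univ_succ]
      simp [Fin.consEquiv]
    rw [← (Fin.consEquiv (fun _ : Fin (n+1) => ℕ)).summable_iff]
    have p1 : (0 : ℕ → ℝ) ≤ fun k : ℕ => ‖h 0 k‖ := fun _ => norm_nonneg _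
    have p2 : (0 : (Fin n → ℕ) → ℝ) ≤ fun m => ∏ j, ‖h j.succ (m j)‖ :=
      fun m => Finset.prod_nonneg fun _ _ => norm_nonneg _
    exact Summable.congr
      (Summable.mul_of_nonneg (hs 0) (ih (fun j => h j.succ) (fun j => hs j.succ)) p1 p2)
      (fun p => (key p).symm)

lemma pi_summable {n : ℕ} (h : Fin n → ℕ → ℂ)
    (hs : ∀ j, Summable fun k => ‖h j k‖) :
    Summable fun m : Fin n → ℕ => ∏ j, h j (m j) := by
  apply Summable.of_norm
  exact (pi_norm_summable h hs).congr fun m => (norm_prod _ _).symm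

lemma pi_tsum : ∀ {n : ℕ} (h : Fin n → ℕ → ℂ),
    (∀ j, Summable fun k => ‖h j k‖) →
    ∑' m : Fin n → ℕ, ∏ j, h j (m j) = ∏ j, ∑' k, h j k := by
  intro n
  induction n with
  | zero =>
    intro h _
    rw [tsum_eq_single (default : Fin 0 → ℕ)
      (fun b' hb' => absurd (Subsingleton.elim b' default) hb')]
    simp
  | succ n ih =>
    intro h hs
    rw [← (Fin.consEquiv (fun _ : Fin (n+1) => ℕ)).tsum_eq]
    have key : ∀ p : ℕ × (Fin n → ℕ),
        (∏ j, h j ((Fin.consEquiv (fun _ : Fin (n+1) => ℕ)) p j)) =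
          h 0 p.1 * ∏ j, h j.succ (p.2 j) := by
      intro p
      rw [Fin.prod_univ_succ]
      simp [Fin.consEquiv]
    rw [tsum_congr key]
    have hsum : Summable fun p : ℕ × (Fin n → ℕ) => h 0 p.1 * ∏ j, h j.succ (p.2 j) := by
      have S2 : Summable ((fun m : Fin (n+1) → ℕ => ∏ j, h j (m j)) ∘
          (Fin.consEquiv (fun _ : Fin (n+1) => ℕ))) :=
        (pi_summable h hs).comp_injective (Fin.consEquiv (fun _ : Fin (n+1) => ℕ)).injective
      exact S2.congr fun p => key p
    have h1 : ∀ k : ℕ, Summable fun c : Fin n → ℕ => h 0 k * ∏ j, h j.succ (c j) :=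
      fun k => (pi_summable (fun j => h j.succ) (fun j => hs j.succ)).mul_left (h 0 k)
    rw [Summable.tsum_prod' hsum h1]
    calc (∑' k, ∑' m : Fin n → ℕ, h 0 k * ∏ j, h j.succ (m j))
        = ∑' k, h 0 k * ∑' m : Fin n → ℕ, ∏ j, h j.succ (m j) := by
          exact tsum_congr fun k => tsum_mul_left
      _ = (∑' k, h 0 k) * ∑' m : Fin n → ℕ, ∏ j, h j.succ (m j) := tsum_mul_right
      _ = ∏ j, ∑' k, h j k := by
          rw [ih (fun j => h j.succ) (fun j => hs j.succ), Fin.prod_univ_succ]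

def Gfun (N : ℕ) (a b : Fin N → ℂ) : (Fin N → ℕ) → ℂ := fun m =>
  (∏ i, b i ^ m i / ((m i).factorial : ℂ)) * Matrix.det (Matrix.of fun i j : Fin N => a i ^ m j)

lemma Gfun_alt (N : ℕ) (a b : Fin N → ℂ) (m : Fin N → ℕ) :
    Gfun N a b m = ∑ σ : Equiv.Perm (Fin N),
      ((Equiv.Perm.sign σ : ℤ) : ℂ) * ∏ i, (a (σ i) * b i) ^ m i / ((m i).factorial : ℂ) := by
  unfold Gfun
  rw [Matrix.det_apply', Finset.mul_sum]
  refine Finset.sum_congr rfl fun σ _ => ?_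
  simp only [Matrix.of_apply]
  have : ∏ i, (a (σ i) * b i) ^ m i / ((m i).factorial : ℂ)
      = (∏ i, a (σ i) ^ m i) * ∏ i, b i ^ m i / ((m i).factorial : ℂ) := by
    rw [← Finset.prod_mul_distrib]
    refine Finset.prod_congr rfl fun i _ => by rw [mul_pow]; ring
  rw [this]; ring

lemma summable_g (N : ℕ) (a b : Fin N → ℂ) (σ : Equiv.Perm (Fin N)) :
    Summable fun m : Fin N → ℕ => ∏ i, (a (σ i) * b i) ^ m i / ((m i).factorial : ℂ) :=
  pi_summable (fun i n => (a (σ i) * b i) ^ n / (n.factorial : ℂ))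
    (fun _ => cexp_norm_summable _)

lemma summable_G (N : ℕ) (a b : Fin N → ℂ) : Summable (Gfun N a b) := by
  have h : ∀ σ ∈ (Finset.univ : Finset (Equiv.Perm (Fin N))),
      Summable fun m : Fin N → ℕ =>
        ((Equiv.Perm.sign σ : ℤ) : ℂ) * ∏ i, (a (σ i) * b i) ^ m i / ((m i).factorial : ℂ) :=
    fun σ _ => (summable_g N a b σ).mul_left (((Equiv.Perm.sign σ : ℤ) : ℂ))
  exact (summable_sum h).congr fun m => (Gfun_alt N a b m).symm

lemma detexp_eq (N : ℕ) (a b : Fin N → ℂ) :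
    Matrix.det (Matrix.of fun i j : Fin N => Complex.exp (a i * b j)) =
      ∑' m : Fin N → ℕ, Gfun N a b m := by
  rw [Matrix.det_apply']
  have h1 : ∀ σ : Equiv.Perm (Fin N),
      (∏ i, (Matrix.of fun i j : Fin N => Complex.exp (a i * b j)) (σ i) i)
        = ∑' m : Fin N → ℕ, ∏ i, (a (σ i) * b i) ^ m i / ((m i).factorial : ℂ) := by
    intro σ
    calc (∏ i, (Matrix.of fun i j : Fin N => Complex.exp (a i * b j)) (σ i) i)
        = ∏ i, ∑' n : ℕ, (a (σ i) * b i) ^ n / (n.factorial : ℂ) :=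
          Finset.prod_congr rfl fun i _ => cexp_tsum (a (σ i) * b i)
      _ = ∑' m : Fin N → ℕ, ∏ i, (a (σ i) * b i) ^ m i / ((m i).factorial : ℂ) :=
          (pi_tsum (fun i n => (a (σ i) * b i) ^ n / (n.factorial : ℂ))
            (fun _ => cexp_norm_summable _)).symm
  calc (∑ σ : Equiv.Perm (Fin N), ((Equiv.Perm.sign σ : ℤ) : ℂ) *
          ∏ i, (Matrix.of fun i j : Fin N => Complex.exp (a i * b j)) (σ i) i)
      = ∑ σ : Equiv.Perm (Fin N), ((Equiv.Perm.sign σ : ℤ) : ℂ) *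
          ∑' m : Fin N → ℕ, ∏ i, (a (σ i) * b i) ^ m i / ((m i).factorial : ℂ) :=
        Finset.sum_congr rfl fun σ _ => by rw [h1 σ]
    _ = ∑ σ : Equiv.Perm (Fin N), ∑' m : Fin N → ℕ, ((Equiv.Perm.sign σ : ℤ) : ℂ) *
          ∏ i, (a (σ i) * b i) ^ m i / ((m i).factorial : ℂ) :=
        Finset.sum_congr rfl fun σ _ => tsum_mul_left.symm
    _ = ∑' m : Fin N → ℕ, ∑ σ : Equiv.Perm (Fin N), ((Equiv.Perm.sign σ : ℤ) : ℂ) *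
          ∏ i, (a (σ i) * b i) ^ m i / ((m i).factorial : ℂ) :=
        (Summable.tsum_finsetSum (fun σ _ =>
          (summable_g N a b σ).mul_left (((Equiv.Perm.sign σ : ℤ) : ℂ)))).symm
    _ = ∑' m : Fin N → ℕ, Gfun N a b m := tsum_congr fun m => (Gfun_alt N a b m).symm

def Phi (N : ℕ) : {f : Fin N → ℕ // StrictAnti f} × Equiv.Perm (Fin N) → (Fin N → ℕ) :=
  fun p => p.1.1 ∘ p.2

lemma Phi_injective (N : ℕ) : Function.Injective (Phi N) := by
  rintro ⟨⟨μ, hμ⟩, σ⟩ ⟨⟨ν, hν⟩, τ⟩ hEq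
  simp only [Phi] at hEq
  have hr : Set.range μ = Set.range ν := by
    have h0 := congrArg Set.range hEq
    simpa [Set.range_comp, Equiv.range_eq_univ, Set.image_univ] using h0
  have hμν : μ = ν := (hμ.range_inj hν).mp hr
  subst hμν
  have hστ : σ = τ := Equiv.ext fun i => hμ.injective (congrFun hEq i)
  subst hστ; rfl

lemma G_zero (N : ℕ) (a b : Fin N → ℂ) (m : Fin N → ℕ)
    (hm : ¬ Function.Injective m) : Gfun N a b m = 0 := by
  rw [Function.not_injective_iff] at hm
  obtain ⟨i, j, hmij, hij⟩ := hm
  unfold Gfun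
  rw [Matrix.det_zero_of_column_eq hij (fun k => by simp [hmij])]
  ring

lemma G_support (N : ℕ) (a b : Fin N → ℂ) :
    Function.support (Gfun N a b) ⊆ Set.range (Phi N) := by
  intro m hm
  have hminj : Function.Injective m := by
    by_contra hc
    exact hm (G_zero N a b m hc)
  have hcard : (Finset.image m Finset.univ).card = N := by
    rw [Finset.card_image_of_injective _ hminj, Finset.card_univ, Fintype.card_fin]
  set s := Finset.image m Finset.univ with hs
  have hνanti : StrictAnti (fun j : Fin N => s.orderEmbOfFin hcard j.rev) := by
    intro j k hjk
    exact (s.orderEmbOfFin hcard).strictMono (Fin.rev_lt_rev.mpr hjk)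
  have hmem : ∀ i, m i ∈ s := fun i => Finset.mem_image_of_mem m (Finset.mem_univ i)
  set g : Fin N → Fin N := fun i => ((s.orderIsoOfFin hcard).symm ⟨m i, hmem i⟩).rev with hg
  have hgval : ∀ i, s.orderEmbOfFin hcard (g i).rev = m i := by
    intro i
    rw [hg]
    simp only [Fin.rev_rev]
    rw [← Finset.coe_orderIsoOfFin_apply]
    simp
  have hginj : Function.Injective g := by
    intro i j hij
    apply hminj
    rw [← hgval i, ← hgval j, hij]
  refine ⟨(⟨_, hνanti⟩, Equiv.ofBijective g (Finite.injective_iff_bijective.mp hginj)), ?_⟩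
  exact funext fun i => hgval i

lemma sumD (N : ℕ) (a b : Fin N → ℂ) (μ : Fin N → ℕ) :
    (∑ σ : Equiv.Perm (Fin N), Gfun N a b (μ ∘ σ)) =
      (∏ j, ((μ j).factorial : ℂ))⁻¹ *
        Matrix.det (Matrix.of fun i j : Fin N => a i ^ μ j) *
        Matrix.det (Matrix.of fun i j : Fin N => b i ^ μ j) := by
  have hdetA : ∀ σ : Equiv.Perm (Fin N),
      Matrix.det (Matrix.of fun i j : Fin N => a i ^ μ (σ j)) =
        ((Equiv.Perm.sign σ : ℤ) : ℂ) *
          Matrix.det (Matrix.of fun i j : Fin N => a i ^ μ j) :=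
    fun σ => Matrix.det_permute' σ (Matrix.of fun i j : Fin N => a i ^ μ j)
  calc (∑ σ : Equiv.Perm (Fin N), Gfun N a b (μ ∘ σ))
      = ∑ σ : Equiv.Perm (Fin N), ((Equiv.Perm.sign σ : ℤ) : ℂ) *
          (∏ i, (Matrix.of fun k i' : Fin N => b i' ^ μ k / ((μ k).factorial : ℂ)) (σ i) i) *
          Matrix.det (Matrix.of fun i j : Fin N => a i ^ μ j) := by
        refine Finset.sum_congr rfl fun σ _ => ?_
        unfold Gfun
        simp only [Function.comp_apply]
        rw [hdetA σ]
        simp only [Matrix.of_apply]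
        ring
    _ = (∑ σ : Equiv.Perm (Fin N), ((Equiv.Perm.sign σ : ℤ) : ℂ) *
          ∏ i, (Matrix.of fun k i' : Fin N => b i' ^ μ k / ((μ k).factorial : ℂ)) (σ i) i) *
          Matrix.det (Matrix.of fun i j : Fin N => a i ^ μ j) := by
        rw [Finset.sum_mul]
    _ = Matrix.det (Matrix.of fun k i : Fin N => b i ^ μ k / ((μ k).factorial : ℂ)) *
          Matrix.det (Matrix.of fun i j : Fin N => a i ^ μ j) := by
        rw [← Matrix.det_apply']
    _ = ((∏ k, ((μ k).factorial : ℂ))⁻¹ *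
          Matrix.det (Matrix.of fun k i : Fin N => b i ^ μ k)) *
          Matrix.det (Matrix.of fun i j : Fin N => a i ^ μ j) := by
        have hBeq : (Matrix.of fun k i : Fin N => b i ^ μ k / ((μ k).factorial : ℂ))
            = Matrix.of (fun k i : Fin N => (((μ k).factorial : ℂ))⁻¹ *
                (Matrix.of fun k' i' : Fin N => b i' ^ μ k') k i) := by
          ext k i; simp [div_eq_mul_inv, mul_comm]
        rw [hBeq, Matrix.det_mul_column, ← Finset.prod_inv_distrib]
    _ = ((∏ k, ((μ k).factorial : ℂ))⁻¹ *
          Matrix.det (Matrix.of fun i k : Fin N => b i ^ μ k)) *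
          Matrix.det (Matrix.of fun i j : Fin N => a i ^ μ j) := by
        rw [show (Matrix.of fun k i : Fin N => b i ^ μ k)
            = (Matrix.of fun i k : Fin N => b i ^ μ k)ᵀ from by ext k i; rfl,
          Matrix.det_transpose]
    _ = (∏ j, ((μ j).factorial : ℂ))⁻¹ *
          Matrix.det (Matrix.of fun i j : Fin N => a i ^ μ j) *
          Matrix.det (Matrix.of fun i j : Fin N => b i ^ μ j) := by
        ring

lemma core (N : ℕ) (a b : Fin N → ℂ) :
    Matrix.det (Matrix.of fun i j : Fin N => Complex.exp (a i * b j)) =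
      ∑' mu : {f : Fin N → ℕ // StrictAnti f},
        (∏ j, ((mu.1 j).factorial : ℂ))⁻¹ *
          Matrix.det (Matrix.of fun i j : Fin N => a i ^ mu.1 j) *
          Matrix.det (Matrix.of fun i j : Fin N => b i ^ mu.1 j) := by
  have hB : (∑' m : Fin N → ℕ, Gfun N a b m)
      = ∑' p : {f : Fin N → ℕ // StrictAnti f} × Equiv.Perm (Fin N), Gfun N a b (Phi N p) :=
    ((Phi_injective N).tsum_eq (G_support N a b)).symm
  have hsum2 : Summable fun p : {f : Fin N → ℕ // StrictAnti f} × Equiv.Perm (Fin N) =>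
      Gfun N a b (Phi N p) :=
    (summable_G N a b).comp_injective (Phi_injective N)
  have hfib : ∀ mu : {f : Fin N → ℕ // StrictAnti f},
      Summable fun σ : Equiv.Perm (Fin N) => Gfun N a b (Phi N (mu, σ)) := fun _ => .of_finite
  rw [detexp_eq N a b, hB, Summable.tsum_prod' hsum2 hfib]
  exact tsum_congr fun mu => by rw [tsum_fintype]; exact sumD N a b mu.1

lemma strictAnti_add_le {N : ℕ} {μ : Fin N → ℕ} (hμ : StrictAnti μ) :
    ∀ j k : Fin N, j ≤ k → μ k + (k : ℕ) ≤ μ j + (j : ℕ) := by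
  have key : ∀ d : ℕ, ∀ j k : Fin N, (k : ℕ) = (j : ℕ) + d →
      μ k + (k : ℕ) ≤ μ j + (j : ℕ) := by
    intro d
    induction d with
    | zero =>
      intro j k hjk
      have : j = k := Fin.ext (by omega)
      subst this; omega
    | succ d ih =>
      intro j k hjk
      have hj1 : (j : ℕ) + 1 < N := by have := k.isLt; omega
      have h1 : μ ⟨(j : ℕ) + 1, hj1⟩ < μ j := hμ (by rw [Fin.lt_def]; simp)
      have h2 := ih ⟨(j : ℕ) + 1, hj1⟩ k (by simp; omega)
      simp only [] at h2 ⊢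
      omega
  intro j k hjk
  exact key ((k : ℕ) - (j : ℕ)) j k (by have : (j : ℕ) ≤ (k : ℕ) := hjk; omega)

lemma strictAnti_lb {N : ℕ} {μ : Fin N → ℕ} (hμ : StrictAnti μ) (j : Fin N) :
    N - 1 - (j : ℕ) ≤ μ j := by
  have hN : 0 < N := Nat.lt_of_le_of_lt (Nat.zero_le _) j.isLt
  have h2 := strictAnti_add_le hμ j ⟨N - 1, by omega⟩
    (by rw [Fin.le_def]; simp; have := j.isLt; omega)
  simp only [] at h2
  have := j.isLt
  omega

/-- reindexing between antitone tuples and strictly antitone tuples -/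
def EAnti (N : ℕ) : {f : Fin N → ℕ // Antitone f} ≃ {f : Fin N → ℕ // StrictAnti f} where
  toFun lam := ⟨fun j => lam.1 j + (N - 1 - (j : ℕ)), by
    intro j k hjk
    have h1 : lam.1 k ≤ lam.1 j := lam.2 (le_of_lt hjk)
    have hj : (j : ℕ) < (k : ℕ) := hjk
    have hk := k.isLt
    show lam.1 k + (N - 1 - (k : ℕ)) < lam.1 j + (N - 1 - (j : ℕ))
    omega⟩
  invFun mu := ⟨fun j => mu.1 j - (N - 1 - (j : ℕ)), by
    intro j k hjk
    have h2 := strictAnti_add_le mu.2 j k hjk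
    have hj := j.isLt
    have hk := k.isLt
    have hjk' : (j : ℕ) ≤ (k : ℕ) := hjk
    show mu.1 k - (N - 1 - (k : ℕ)) ≤ mu.1 j - (N - 1 - (j : ℕ))
    omega⟩
  left_inv lam := Subtype.ext (funext fun j => by simp)
  right_inv mu := Subtype.ext (funext fun j => by
    have h1 := strictAnti_lb mu.2 j
    have := j.isLt
    simp only []
    omega)

lemma nat_prod_fact (c : ℕ) : ∀ L : ℕ,
    (∏ j ∈ range L, (c + 1 + j)) * c.factorial = (c + L).factorial := by
  intro L
  induction L with
  | zero => simp
  | succ L ih =>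
    rw [prod_range_succ, mul_right_comm, ih]
    have h1 : c + (L + 1) = (c + L) + 1 := by omega
    rw [h1, Nat.factorial_succ]
    ring_nf

lemma complex_poch (N : ℕ) (i : Fin N) (L : ℕ) :
    (∏ j ∈ range L, ((N : ℂ) + (j : ℕ) - ((i : ℕ) : ℂ))) =
      (((N - 1 - (i : ℕ) + L).factorial : ℕ) : ℂ) /
        (((N - 1 - (i : ℕ)).factorial : ℕ) : ℂ) := by
  set c := N - 1 - (i : ℕ) with hc
  have hci : ∀ j : ℕ, (N : ℂ) + (j : ℕ) - ((i : ℕ) : ℂ) = ((c + 1 + j : ℕ) : ℂ) := by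
    intro j
    have hiN : (i : ℕ) ≤ N := le_of_lt i.isLt
    have h2 : N - (i : ℕ) = c + 1 := by have := i.isLt; omega
    calc (N : ℂ) + (j : ℕ) - ((i : ℕ) : ℂ)
        = ((N - (i : ℕ) : ℕ) : ℂ) + (j : ℕ) := by rw [Nat.cast_sub hiN]; ring
      _ = ((c + 1 + j : ℕ) : ℂ) := by rw [h2]; push_cast; ring
  rw [Finset.prod_congr rfl (fun j _ => hci j), ← Nat.cast_prod]
  rw [eq_div_iff (by exact_mod_cast (Nat.factorial_pos c).ne')]
  rw [← Nat.cast_mul, nat_prod_fact c L]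

end AuxStmt6

open Finset

/-- For pairwise distinct `a_i` and `b_j`:
`Σ_{ℓ(λ)≤N} (1/(N)_λ) s_λ(a) s_λ(b) = (∏_{k=1}^{N-1} k!) det(e^{a_i b_j})/(Δ(a)Δ(b))`,
where `(N)_λ = ∏_{(i,j)∈λ}(N-i+j)` and `s_λ` is given by the bialternant formula. -/
theorem stmt6 (N : ℕ) (a b : Fin N → ℂ)
    (ha : Function.Injective a) (hb : Function.Injective b) :
    (∑' lam : {f : Fin N → ℕ // Antitone f},
        (∏ i : Fin N, ∏ j ∈ range (lam.1 i), ((N : ℂ) + (j : ℂ) - ((i : ℕ) : ℂ)))⁻¹ *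
          (Matrix.det (Matrix.of fun i j : Fin N => a i ^ (lam.1 j + (N - 1 - (j : ℕ)))) /
            ∏ i : Fin N, ∏ j ∈ Finset.univ.filter (fun j => i < j), (a i - a j)) *
          (Matrix.det (Matrix.of fun i j : Fin N => b i ^ (lam.1 j + (N - 1 - (j : ℕ)))) /
            ∏ i : Fin N, ∏ j ∈ Finset.univ.filter (fun j => i < j), (b i - b j))) =
      (∏ k ∈ range N, (Nat.factorial k : ℂ)) *
        Matrix.det (Matrix.of fun i j : Fin N => Complex.exp (a i * b j)) /
        ((∏ i : Fin N, ∏ j ∈ Finset.univ.filter (fun j => i < j), (a i - a j)) *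
          ∏ i : Fin N, ∏ j ∈ Finset.univ.filter (fun j => i < j), (b i - b j)) := by
  set Δa : ℂ := ∏ i : Fin N, ∏ j ∈ Finset.univ.filter (fun j => i < j), (a i - a j) with hΔa
  set Δb : ℂ := ∏ i : Fin N, ∏ j ∈ Finset.univ.filter (fun j => i < j), (b i - b j) with hΔb
  set C : ℂ := ∏ k ∈ range N, (Nat.factorial k : ℂ) with hC
  have hC' : (∏ i : Fin N, (((N - 1 - (i : ℕ)).factorial : ℕ) : ℂ)) = C := by
    rw [hC, Fin.prod_univ_eq_prod_range (fun k => (((N - 1 - k).factorial : ℕ) : ℂ)) N]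
    exact prod_range_reflect (fun k => ((k.factorial : ℕ) : ℂ)) N
  have hterm : ∀ lam : {f : Fin N → ℕ // Antitone f},
      (∏ i : Fin N, ∏ j ∈ range (lam.1 i), ((N : ℂ) + (j : ℂ) - ((i : ℕ) : ℂ)))⁻¹ *
        (Matrix.det (Matrix.of fun i j : Fin N => a i ^ (lam.1 j + (N - 1 - (j : ℕ)))) / Δa) *
        (Matrix.det (Matrix.of fun i j : Fin N => b i ^ (lam.1 j + (N - 1 - (j : ℕ)))) / Δb) =
      (C / (Δa * Δb)) *
        ((∏ j : Fin N, (((EAnti N lam).1 j).factorial : ℂ))⁻¹ *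
          Matrix.det (Matrix.of fun i j : Fin N => a i ^ (EAnti N lam).1 j) *
          Matrix.det (Matrix.of fun i j : Fin N => b i ^ (EAnti N lam).1 j)) := by
    intro lam
    have hcoeff : (∏ i : Fin N, ∏ j ∈ range (lam.1 i), ((N : ℂ) + (j : ℂ) - ((i : ℕ) : ℂ)))
        = (∏ j : Fin N, (((lam.1 j + (N - 1 - (j : ℕ))).factorial : ℕ) : ℂ)) / C := by
      rw [Finset.prod_congr rfl (fun i _ => complex_poch N i (lam.1 i)),
        Finset.prod_div_distrib, hC']
      congr 1
      refine Finset.prod_congr rfl fun i _ => ?_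
      rw [Nat.add_comm]
    show (∏ i : Fin N, ∏ j ∈ range (lam.1 i), ((N : ℂ) + (j : ℂ) - ((i : ℕ) : ℂ)))⁻¹ *
        (Matrix.det (Matrix.of fun i j : Fin N => a i ^ (lam.1 j + (N - 1 - (j : ℕ)))) / Δa) *
        (Matrix.det (Matrix.of fun i j : Fin N => b i ^ (lam.1 j + (N - 1 - (j : ℕ)))) / Δb) =
      (C / (Δa * Δb)) *
        ((∏ j : Fin N, (((lam.1 j + (N - 1 - (j : ℕ))).factorial : ℕ) : ℂ))⁻¹ *
          Matrix.det (Matrix.of fun i j : Fin N => a i ^ (lam.1 j + (N - 1 - (j : ℕ)))) *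
          Matrix.det (Matrix.of fun i j : Fin N => b i ^ (lam.1 j + (N - 1 - (j : ℕ)))))
    rw [hcoeff]
    field_simp
  calc (∑' lam : {f : Fin N → ℕ // Antitone f},
        (∏ i : Fin N, ∏ j ∈ range (lam.1 i), ((N : ℂ) + (j : ℂ) - ((i : ℕ) : ℂ)))⁻¹ *
          (Matrix.det (Matrix.of fun i j : Fin N => a i ^ (lam.1 j + (N - 1 - (j : ℕ)))) / Δa) *
          (Matrix.det (Matrix.of fun i j : Fin N => b i ^ (lam.1 j + (N - 1 - (j : ℕ)))) / Δb))
      = ∑' lam : {f : Fin N → ℕ // Antitone f}, (C / (Δa * Δb)) *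
          ((∏ j : Fin N, (((EAnti N lam).1 j).factorial : ℂ))⁻¹ *
            Matrix.det (Matrix.of fun i j : Fin N => a i ^ (EAnti N lam).1 j) *
            Matrix.det (Matrix.of fun i j : Fin N => b i ^ (EAnti N lam).1 j)) :=
        tsum_congr hterm
    _ = (C / (Δa * Δb)) * ∑' lam : {f : Fin N → ℕ // Antitone f},
          ((∏ j : Fin N, (((EAnti N lam).1 j).factorial : ℂ))⁻¹ *
            Matrix.det (Matrix.of fun i j : Fin N => a i ^ (EAnti N lam).1 j) *
            Matrix.det (Matrix.of fun i j : Fin N => b i ^ (EAnti N lam).1 j)) := tsum_mul_left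
    _ = (C / (Δa * Δb)) * ∑' mu : {f : Fin N → ℕ // StrictAnti f},
          ((∏ j : Fin N, ((mu.1 j).factorial : ℂ))⁻¹ *
            Matrix.det (Matrix.of fun i j : Fin N => a i ^ mu.1 j) *
            Matrix.det (Matrix.of fun i j : Fin N => b i ^ mu.1 j)) := by
        rw [(EAnti N).tsum_eq (fun mu : {f : Fin N → ℕ // StrictAnti f} =>
          (∏ j : Fin N, ((mu.1 j).factorial : ℂ))⁻¹ *
            Matrix.det (Matrix.of fun i j : Fin N => a i ^ mu.1 j) *
            Matrix.det (Matrix.of fun i j : Fin N => b i ^ mu.1 j))]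
    _ = (C / (Δa * Δb)) * Matrix.det (Matrix.of fun i j : Fin N => Complex.exp (a i * b j)) := by
        rw [← core N a b]
    _ = C * Matrix.det (Matrix.of fun i j : Fin N => Complex.exp (a i * b j)) / (Δa * Δb) :=
        div_mul_eq_mul_div C (Δa * Δb) _
end

section
/- Andréief identity: for functions φ_1,…,φ_N and ψ_1,…,ψ_N integrable against a measure μ on ℝ, ∫⋯∫ det(φ_i(x_j))_{i,j} · det(ψ_k(x_l))_{k,l} dμ(x_1)⋯dμ(x_N) = N! · det(∫ φ_i(x) ψ_j(x) dμ(x))_{1≤i,j≤N}. -/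
open Finset MeasureTheory Equiv

-- general-measure versions of the pi lemmas
lemma my_integrable_pi {α : Type*} [MeasurableSpace α] (μ : Measure α) [SigmaFinite μ]
    {ι : Type*} [Fintype ι] {f : ι → α → ℂ} (hf : ∀ i, Integrable (f i) μ) :
    Integrable (fun x : ι → α => ∏ i, f i (x i)) (Measure.pi fun _ => μ) := by
  letI : MeasureSpace α := ⟨μ⟩
  haveI : SigmaFinite (volume : Measure α) := ‹_›
  exact Integrable.fintype_prod hf

lemma my_integral_pi {α : Type*} [MeasurableSpace α] (μ : Measure α) [SigmaFinite μ]
    {ι : Type*} [Fintype ι] (f : ι → α → ℂ) :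
    ∫ x : ι → α, ∏ i, f i (x i) ∂(Measure.pi fun _ => μ) = ∏ i, ∫ x, f i x ∂μ := by
  letI : MeasureSpace α := ⟨μ⟩
  haveI : SigmaFinite (volume : Measure α) := ‹_›
  exact integral_fintype_prod_eq_prod f

lemma my_alg (N : ℕ) (A : Matrix (Fin N) (Fin N) ℂ) :
    ∑ σ : Perm (Fin N), ∑ τ : Perm (Fin N),
        (((Equiv.Perm.sign σ : ℤ) : ℂ) * ((Equiv.Perm.sign τ : ℤ) : ℂ)) *
          ∏ j, A (σ j) (τ j) = (N.factorial : ℂ) * A.det := by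
  rw [Finset.sum_comm]
  have h : ∀ τ : Perm (Fin N), ∑ σ : Perm (Fin N),
      (((Equiv.Perm.sign σ : ℤ) : ℂ) * ((Equiv.Perm.sign τ : ℤ) : ℂ)) * ∏ j, A (σ j) (τ j)
      = A.det := by
    intro τ
    rw [Matrix.det_apply']
    apply Fintype.sum_equiv (Equiv.mulRight τ⁻¹)
    intro σ
    simp only [Equiv.coe_mulRight, Equiv.Perm.mul_apply]
    have h1 : ∏ j, A (σ j) (τ j) = ∏ x, A (σ (τ⁻¹ x)) x := by
      rw [← Equiv.prod_comp τ (fun x => A (σ (τ⁻¹ x)) x)]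
      simp
    rw [h1, map_mul, Equiv.Perm.sign_inv]
    push_cast
    ring
  simp_rw [h]
  rw [Finset.sum_const, Finset.card_univ, Fintype.card_perm, Fintype.card_fin, nsmul_eq_mul]

/-- Andréief identity:
`∫⋯∫ det(φ_i(x_j)) det(ψ_k(x_l)) dμ(x_1)⋯dμ(x_N) = N! det(∫ φ_i ψ_j dμ)`. -/
theorem stmt7 (N : ℕ) (μ : Measure ℝ) [SigmaFinite μ] (φ ψ : Fin N → ℝ → ℂ)
    (hmeasφ : ∀ i, AEStronglyMeasurable (φ i) μ)
    (hmeasψ : ∀ i, AEStronglyMeasurable (ψ i) μ)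
    (hint : ∀ i j, Integrable (fun x => φ i x * ψ j x) μ) :
    (∫ x : Fin N → ℝ,
        Matrix.det (Matrix.of fun i j : Fin N => φ i (x j)) *
          Matrix.det (Matrix.of fun k l : Fin N => ψ k (x l))
        ∂(Measure.pi fun _ => μ)) =
      (N.factorial : ℂ) *
        Matrix.det (Matrix.of fun i j : Fin N => ∫ x : ℝ, φ i x * ψ j x ∂μ) := by
  have hkey : ∀ x : Fin N → ℝ,
      Matrix.det (Matrix.of fun i j : Fin N => φ i (x j)) *
        Matrix.det (Matrix.of fun k l : Fin N => ψ k (x l)) =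
      ∑ p : Perm (Fin N) × Perm (Fin N),
        (((Equiv.Perm.sign p.1 : ℤ) : ℂ) * ((Equiv.Perm.sign p.2 : ℤ) : ℂ)) *
          ∏ j, (φ (p.1 j) (x j) * ψ (p.2 j) (x j)) := by
    intro x
    rw [Fintype.sum_prod_type, Matrix.det_apply', Matrix.det_apply', Finset.sum_mul_sum]
    refine Finset.sum_congr rfl fun σ _ => Finset.sum_congr rfl fun τ _ => ?_
    simp only [Matrix.of_apply]
    rw [Finset.prod_mul_distrib]
    ring
  simp_rw [hkey]
  rw [MeasureTheory.integral_finset_sum]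
  · have hterm : ∀ p : Perm (Fin N) × Perm (Fin N),
        (∫ x : Fin N → ℝ,
          (((Equiv.Perm.sign p.1 : ℤ) : ℂ) * ((Equiv.Perm.sign p.2 : ℤ) : ℂ)) *
            ∏ j, (φ (p.1 j) (x j) * ψ (p.2 j) (x j)) ∂(Measure.pi fun _ => μ)) =
        (((Equiv.Perm.sign p.1 : ℤ) : ℂ) * ((Equiv.Perm.sign p.2 : ℤ) : ℂ)) *
          ∏ j, ∫ x : ℝ, φ (p.1 j) x * ψ (p.2 j) x ∂μ := by
      intro p
      rw [MeasureTheory.integral_const_mul,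
        my_integral_pi μ (fun j t => φ (p.1 j) t * ψ (p.2 j) t)]
    simp_rw [hterm]
    rw [Fintype.sum_prod_type]
    exact my_alg N (Matrix.of fun i j : Fin N => ∫ x : ℝ, φ i x * ψ j x ∂μ)
  · intro p _
    exact (my_integrable_pi μ (fun j => hint (p.1 j) (p.2 j))).const_mul _
end

section
/- Jacobi–Trudi determinantal evaluation of the Schur polynomial matches the bialternant formula: for a partition λ with ℓ(λ) ≤ N and variables a_1,…,a_N with the h_i taken as complete homogeneous symmetric polynomials in a, det(h_{λ_i - i + j})_{1≤i,j≤ℓ(λ)} · Δ(a) = det(a_i^{λ_j - j + N})_{1≤i,j≤N}, where Δ(a) = ∏_{i<j}(a_i - a_j). -/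
open Finset PowerSeries

noncomputable section
variable {N : ℕ} (a : Fin N → ℂ)

def hh (a : Fin N → ℂ) (k : ℕ) : ℂ := ∑ m ∈ Finset.Nat.antidiagonalTuple N k, ∏ s, a s ^ m s

lemma hh_zero : hh a 0 = 1 := by
  simp [hh, Finset.Nat.antidiagonalTuple_zero_right]

lemma geom (c : ℂ) : (1 - PowerSeries.C c * X) * PowerSeries.mk (fun n => c ^ n) = 1 := by
  ext n
  rw [sub_mul, one_mul, map_sub, mul_assoc]
  cases n with
  | zero => simp
  | succ n => simp [PowerSeries.coeff_succ_X_mul, pow_succ, mul_comm]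

lemma mk_hh : PowerSeries.mk (hh a) = ∏ s : Fin N, PowerSeries.mk (fun n => a s ^ n) := by
  ext d
  rw [PowerSeries.coeff_mk, PowerSeries.coeff_prod]
  simp only [PowerSeries.coeff_mk]
  rw [hh]
  refine Finset.sum_nbij' (fun m => Finsupp.equivFunOnFinite.symm m) (fun l => (l : Fin N → ℕ)) ?_ ?_ ?_ ?_ ?_
  · intro m hm
    rw [Finset.Nat.mem_antidiagonalTuple] at hm
    rw [Finset.mem_finsuppAntidiag]
    refine ⟨?_, Finset.subset_univ _⟩
    rw [Finset.sum_congr rfl (fun i _ => rfl : ∀ i ∈ univ, Finsupp.equivFunOnFinite.symm m i = m i)]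
    exact hm
  · intro l hl
    rw [Finset.mem_finsuppAntidiag] at hl
    rw [Finset.Nat.mem_antidiagonalTuple]
    rw [← hl.1]
  · intro m _; rfl
  · intro l _; exact (Equiv.symm_apply_apply _ _ : _)
  · intro m _; rfl

def PP (a : Fin N → ℂ) (j : Fin N) : Polynomial ℂ :=
  ∏ s ∈ univ.erase j, (1 - Polynomial.C (a s) * Polynomial.X)

lemma PP_coeff_zero (j : Fin N) {k : ℕ} (hk : N ≤ k) : (PP a j).coeff k = 0 := by
  apply Polynomial.coeff_eq_zero_of_natDegree_lt
  have h1 : (PP a j).natDegree ≤ ∑ s ∈ univ.erase j, (1 - Polynomial.C (a s) * Polynomial.X).natDegree :=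
    Polynomial.natDegree_prod_le _ _
  have h2 : ∑ s ∈ univ.erase j, (1 - Polynomial.C (a s) * Polynomial.X).natDegree
      ≤ ∑ _s ∈ univ.erase j, 1 := by
    refine Finset.sum_le_sum fun s _ => ?_
    refine le_trans (Polynomial.natDegree_sub_le _ _) ?_
    simp only [Polynomial.natDegree_one, max_le_iff]
    exact ⟨Nat.zero_le _, le_trans (Polynomial.natDegree_mul_le) (by simp)⟩
  have h3 : ∑ _s ∈ univ.erase j, (1:ℕ) = N - 1 := by
    rw [Finset.sum_const, smul_eq_mul, mul_one, Finset.card_erase_of_mem (mem_univ j),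
      Finset.card_univ, Fintype.card_fin]
  have := j.pos
  omega

lemma PP_mul_hh (j : Fin N) :
    (PP a j : PowerSeries ℂ) * PowerSeries.mk (hh a) = PowerSeries.mk (fun n => a j ^ n) := by
  rw [mk_hh, PP, ← Polynomial.coeToPowerSeries.ringHom_apply, map_prod]
  rw [← Finset.mul_prod_erase (univ) (fun s => PowerSeries.mk (fun n => a s ^ n)) (mem_univ j),
    mul_comm (PowerSeries.mk fun n => a j ^ n), ← mul_assoc, ← Finset.prod_mul_distrib]
  have : ∀ s ∈ univ.erase j,
      Polynomial.coeToPowerSeries.ringHom (1 - Polynomial.C (a s) * Polynomial.X) *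
        PowerSeries.mk (fun n => a s ^ n) = 1 := by
    intro s _
    rw [← geom (a s)]
    congr 1
    rw [Polynomial.coeToPowerSeries.ringHom_apply]
    push_cast
    rfl
  rw [Finset.prod_congr rfl this, Finset.prod_const_one, one_mul]

lemma key_s10 (j : Fin N) (β : ℕ) :
    ∑ k : Fin N, (PP a j).coeff (k : ℕ) * (if (k:ℕ) ≤ β then hh a (β - k) else 0) = a j ^ β := by
  have h := congrArg (PowerSeries.coeff β) (PP_mul_hh a j)
  rw [PowerSeries.coeff_mk, PowerSeries.coeff_mul] at h
  rw [Finset.Nat.sum_antidiagonal_eq_sum_range_succ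
    (f := fun i k => (PowerSeries.coeff i) ↑(PP a j) * (PowerSeries.coeff k) (PowerSeries.mk (hh a)))] at h
  simp only [PowerSeries.coeff_mk, Polynomial.coeff_coe] at h
  rw [← h, Fin.sum_univ_eq_sum_range (fun k => (PP a j).coeff k * if k ≤ β then hh a (β - k) else 0)]
  have hfil : (Finset.range (max N (β+1))).filter (fun k => k ≤ β) = Finset.range (β+1) := by
    ext x; simp only [Finset.mem_filter, Finset.mem_range]; omega
  have e1 : ∑ k ∈ Finset.range N, ((PP a j).coeff k * if k ≤ β then hh a (β - k) else 0)
      = ∑ k ∈ Finset.range (max N (β+1)), ((PP a j).coeff k * if k ≤ β then hh a (β - k) else 0) := by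
    refine Finset.sum_subset (Finset.range_subset_range.2 (le_max_left _ _)) fun x _ hx => ?_
    rw [PP_coeff_zero a j (by simpa using hx), zero_mul]
  rw [e1, ← hfil, Finset.sum_filter]
  refine Finset.sum_congr rfl fun x _ => ?_
  by_cases hx : x ≤ β <;> simp [hx]

-- product-of-differences reversal
lemma prod_rev (f : Fin N → Fin N → ℂ) :
    ∏ i : Fin N, ∏ j ∈ Finset.Ioi i, f i j
      = ∏ i : Fin N, ∏ j ∈ Finset.Ioi i, f (Fin.rev j) (Fin.rev i) := by
  rw [Finset.prod_sigma', Finset.prod_sigma']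
  refine Finset.prod_nbij' (fun p => ⟨Fin.rev p.2, Fin.rev p.1⟩)
    (fun p => ⟨Fin.rev p.2, Fin.rev p.1⟩) ?_ ?_ ?_ ?_ ?_
  · rintro ⟨i, j⟩ hp
    simp only [Finset.mem_sigma, Finset.mem_univ, Finset.mem_Ioi, true_and] at hp ⊢
    exact Fin.rev_lt_rev.mpr hp
  · rintro ⟨i, j⟩ hp
    simp only [Finset.mem_sigma, Finset.mem_univ, Finset.mem_Ioi, true_and] at hp ⊢
    exact Fin.rev_lt_rev.mpr hp
  · rintro ⟨i, j⟩ _; simp [Fin.rev_rev]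
  · rintro ⟨i, j⟩ _; simp [Fin.rev_rev]
  · rintro ⟨i, j⟩ _; simp [Fin.rev_rev]
def JTm (a : Fin N → ℂ) (lam : ℕ → ℕ) (ℓ : ℕ) : Matrix (Fin ℓ) (Fin ℓ) ℂ :=
  Matrix.of fun i j : Fin ℓ =>
    if (i : ℕ) ≤ lam i + (j : ℕ) then hh a (lam i + (j : ℕ) - (i : ℕ)) else 0

-- the JT det is stable under padding
lemma det_JT_pad (lam : ℕ → ℕ) (hℓN : ℓ ≤ N) (hlam : ∀ i, ℓ ≤ i → lam i = 0) :
    (JTm a lam N).det = (JTm a lam ℓ).det := by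
  have hadd : ℓ + (N - ℓ) = N := Nat.add_sub_cancel' hℓN
  let e : Fin ℓ ⊕ Fin (N - ℓ) ≃ Fin N := finSumFinEquiv.trans (finCongr hadd)
  have hval1 : ∀ i : Fin ℓ, ((e (Sum.inl i) : Fin N) : ℕ) = (i : ℕ) := by
    intro i; simp [e, finCongr_apply]
  have hval2 : ∀ k : Fin (N - ℓ), ((e (Sum.inr k) : Fin N) : ℕ) = ℓ + (k : ℕ) := by
    intro k; simp [e, finCongr_apply]
  let D : Matrix (Fin (N - ℓ)) (Fin (N - ℓ)) ℂ :=
    Matrix.of fun k k' => if (k : ℕ) ≤ (k' : ℕ) then hh a ((k' : ℕ) - (k : ℕ)) else 0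
  let C : Matrix (Fin ℓ) (Fin (N - ℓ)) ℂ :=
    Matrix.of fun i k => if (i : ℕ) ≤ lam i + (ℓ + (k : ℕ)) then
      hh a (lam i + (ℓ + (k : ℕ)) - (i : ℕ)) else 0
  have hsub : (JTm a lam N).submatrix e e = Matrix.fromBlocks (JTm a lam ℓ) C 0 D := by
    ext p q
    rcases p with i | k <;> rcases q with j | k'
    · simp only [Matrix.submatrix_apply, JTm, Matrix.of_apply, hval1,
        Matrix.fromBlocks_apply₁₁]
    · simp only [Matrix.submatrix_apply, JTm, Matrix.of_apply, hval1, hval2,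
        Matrix.fromBlocks_apply₁₂, C]
    · simp only [Matrix.submatrix_apply, JTm, Matrix.of_apply, hval1, hval2,
        Matrix.fromBlocks_apply₂₁, Matrix.zero_apply]
      rw [hlam _ (Nat.le_add_right ℓ k), if_neg (by have := j.isLt; omega)]
    · simp only [Matrix.submatrix_apply, JTm, Matrix.of_apply, hval2,
        Matrix.fromBlocks_apply₂₂, D]
      rw [hlam _ (Nat.le_add_right ℓ k)]
      by_cases h : (k : ℕ) ≤ (k' : ℕ)
      · rw [if_pos (by omega), if_pos h]
        congr 1
        omega
      · rw [if_neg (by omega), if_neg h]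
  have hD : D.det = 1 := by
    have ht : D.BlockTriangular id := by
      intro k k' h
      simp only [id_eq] at h
      simp only [D, Matrix.of_apply]
      rw [if_neg (by exact_mod_cast Nat.not_le.mpr h)]
    rw [Matrix.det_of_upperTriangular ht]
    refine Finset.prod_eq_one fun k _ => ?_
    simp [D, hh_zero]
  calc (JTm a lam N).det = ((JTm a lam N).submatrix e e).det :=
        (Matrix.det_submatrix_equiv_self e _).symm
    _ = (Matrix.fromBlocks (JTm a lam ℓ) C 0 D).det := by rw [hsub]
    _ = (JTm a lam ℓ).det * D.det := Matrix.det_fromBlocks_zero₂₁ _ _ _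
    _ = (JTm a lam ℓ).det := by rw [hD, mul_one]

def Hmm (a : Fin N → ℂ) (β : Fin N → ℕ) : Matrix (Fin N) (Fin N) ℂ :=
  Matrix.of fun k j' => if (k : ℕ) ≤ β j' then hh a (β j' - (k : ℕ)) else 0

def Mmm (a : Fin N → ℂ) : Matrix (Fin N) (Fin N) ℂ :=
  Matrix.of fun j k => (PP a j).coeff (k : ℕ)

lemma Mmm_mul_Hmm (β : Fin N → ℕ) :
    Mmm a * Hmm a β = Matrix.of (fun j j' => a j ^ β j') := by
  ext j j'
  simp only [Matrix.mul_apply, Mmm, Hmm, Matrix.of_apply]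
  exact key_s10 a j (β j')

lemma det_rev_rows (M : Matrix (Fin N) (Fin N) ℂ) :
    M.det = ((Equiv.Perm.sign (Fin.revPerm : Equiv.Perm (Fin N)) : ℤ) : ℂ) *
      (Matrix.of fun i j => M (Fin.rev i) j).det := by
  have h : (Matrix.of fun i j => M (Fin.rev i) j) = M.submatrix Fin.revPerm id := by
    ext i j; rfl
  rw [h, Matrix.det_permute, ← mul_assoc]
  have h2 : (Equiv.Perm.sign (Fin.revPerm : Equiv.Perm (Fin N))) *
      (Equiv.Perm.sign (Fin.revPerm : Equiv.Perm (Fin N))) = 1 := Int.units_mul_self _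
  have h3 : ((Equiv.Perm.sign (Fin.revPerm : Equiv.Perm (Fin N)) : ℤ) : ℂ) *
      ((Equiv.Perm.sign (Fin.revPerm : Equiv.Perm (Fin N)) : ℤ) : ℂ) = 1 := by
    rw [← Int.cast_mul, ← Units.val_mul, h2, Units.val_one, Int.cast_one]
  rw [h3, one_mul]

lemma det_Hmm_JT (lam : ℕ → ℕ) :
    (Hmm a (fun j' => lam (j' : ℕ) + (N - 1 - (j' : ℕ)))).det =
      ((Equiv.Perm.sign (Fin.revPerm : Equiv.Perm (Fin N)) : ℤ) : ℂ) * (JTm a lam N).det := by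
  rw [det_rev_rows]
  congr 1
  rw [← Matrix.det_transpose (JTm a lam N)]
  congr 1
  ext i j'
  simp only [Matrix.of_apply, Hmm, Matrix.transpose_apply, JTm]
  have h1 : ((Fin.rev i : Fin N) : ℕ) = N - ((i : ℕ) + 1) := rfl
  have hi := i.isLt
  have hj := j'.isLt
  by_cases h : ((j' : ℕ)) ≤ lam (j' : ℕ) + (i : ℕ)
  · rw [if_pos (by omega), if_pos h]
    congr 1
    omega
  · rw [if_neg (by omega), if_neg h]

lemma det_Hmm_zero :
    (Hmm a (fun j' => N - 1 - (j' : ℕ))).det =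
      ((Equiv.Perm.sign (Fin.revPerm : Equiv.Perm (Fin N)) : ℤ) : ℂ) := by
  rw [det_rev_rows]
  have ht : (Matrix.of fun i j' => Hmm a (fun j' => N - 1 - (j' : ℕ)) (Fin.rev i) j').BlockTriangular
      OrderDual.toDual := by
    intro i j' h
    simp only [OrderDual.toDual_lt_toDual] at h
    have hi := i.isLt
    have hj := j'.isLt
    have hlt : (i : ℕ) < (j' : ℕ) := h
    simp only [Matrix.of_apply, Hmm]
    rw [if_neg (by simp only [Fin.val_rev]; omega)]
  rw [Matrix.det_of_lowerTriangular _ ht]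
  have : ∀ i : Fin N, (Matrix.of fun i j' => Hmm a (fun j' => N - 1 - (j' : ℕ)) (Fin.rev i) j') i i
      = 1 := by
    intro i
    have hi := i.isLt
    simp only [Matrix.of_apply, Hmm, Fin.val_rev]
    rw [if_pos (by omega)]
    have : N - 1 - (i : ℕ) - (N - ((i : ℕ) + 1)) = 0 := by omega
    rw [this, hh_zero]
  rw [Finset.prod_congr rfl fun i _ => this i, Finset.prod_const_one, mul_one]

end

open Finset

/-- Jacobi–Trudi matches the bialternant formula: for a partition `λ` with
`ℓ(λ) ≤ N` and variables `a_1,…,a_N`,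
`det(h_{λ_i-i+j})_{1≤i,j≤ℓ(λ)} · Δ(a) = det(a_i^{λ_j-j+N})_{1≤i,j≤N}`, where `h_k`
is the complete homogeneous symmetric polynomial of degree `k` in the `a_i`
(and `h_k = 0` for `k < 0`), and `Δ(a) = ∏_{i<j}(a_i - a_j)`. -/
theorem stmt10 (N ℓ : ℕ) (hℓN : ℓ ≤ N) (lam : ℕ → ℕ) (hanti : Antitone lam)
    (hsupp : ∀ i, 0 < lam i ↔ i < ℓ) (a : Fin N → ℂ) :
    Matrix.det (Matrix.of fun i j : Fin ℓ =>
        if (i : ℕ) ≤ lam i + (j : ℕ) then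
          ∑ m ∈ Finset.Nat.antidiagonalTuple N (lam i + (j : ℕ) - (i : ℕ)),
            ∏ s : Fin N, a s ^ m s
        else 0) *
      (∏ i : Fin N, ∏ j ∈ Finset.univ.filter (fun j => i < j), (a i - a j)) =
    Matrix.det (Matrix.of fun i j : Fin N => a i ^ (lam (j : ℕ) + (N - 1 - (j : ℕ)))) := by
  have hlam0 : ∀ i, ℓ ≤ i → lam i = 0 := fun i hi => by
    by_contra h
    exact absurd ((hsupp i).mp (Nat.pos_of_ne_zero h)) (by omega)
  set ε : ℂ := ((Equiv.Perm.sign (Fin.revPerm : Equiv.Perm (Fin N)) : ℤ) : ℂ) with hε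
  -- the LHS determinant is the JT determinant
  have hJT : (Matrix.of fun i j : Fin ℓ =>
      if (i : ℕ) ≤ lam i + (j : ℕ) then
        ∑ m ∈ Finset.Nat.antidiagonalTuple N (lam i + (j : ℕ) - (i : ℕ)),
          ∏ s : Fin N, a s ^ m s
      else 0) = JTm a lam ℓ := rfl
  -- Δ = ε * det (vandermonde a)
  have hfil : ∀ i : Fin N, Finset.univ.filter (fun j => i < j) = Finset.Ioi i := by
    intro i; ext j; simp
  have hΔ : (∏ i : Fin N, ∏ j ∈ Finset.univ.filter (fun j => i < j), (a i - a j)) =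
      ε * (Matrix.vandermonde a).det := by
    calc (∏ i : Fin N, ∏ j ∈ Finset.univ.filter (fun j => i < j), (a i - a j))
        = ∏ i : Fin N, ∏ j ∈ Finset.Ioi i, (a i - a j) := by
          exact Finset.prod_congr rfl fun i _ => by rw [hfil]
      _ = ∏ i : Fin N, ∏ j ∈ Finset.Ioi i, ((a ∘ Fin.rev) j - (a ∘ Fin.rev) i) :=
          prod_rev (fun i j => a i - a j)
      _ = (Matrix.vandermonde (a ∘ Fin.rev)).det := (Matrix.det_vandermonde _).symm
      _ = ((Matrix.vandermonde a).submatrix Fin.revPerm id).det := by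
          congr 1
      _ = ε * (Matrix.vandermonde a).det := by
          rw [Matrix.det_permute]
  -- det Am β0 = ε * det vandermonde
  have hA0 : (Matrix.of fun j j' : Fin N => a j ^ (N - 1 - (j' : ℕ))).det =
      ε * (Matrix.vandermonde a).det := by
    have : (Matrix.of fun j j' : Fin N => a j ^ (N - 1 - (j' : ℕ))) =
        (Matrix.vandermonde a).submatrix id Fin.revPerm := by
      ext j j'
      have := j'.isLt
      simp only [Matrix.of_apply, Matrix.submatrix_apply, Matrix.vandermonde, Fin.revPerm_apply,
        Fin.val_rev, Matrix.of_apply, id_eq]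
      congr 1
      omega
    rw [this, Matrix.det_permute']
  -- decompose both bialternants
  have h1 := congrArg Matrix.det (Mmm_mul_Hmm a (fun j' => lam (j' : ℕ) + (N - 1 - (j' : ℕ))))
  have h0 := congrArg Matrix.det (Mmm_mul_Hmm a (fun j' => N - 1 - (j' : ℕ)))
  rw [Matrix.det_mul] at h1 h0
  rw [det_Hmm_zero] at h0
  rw [det_Hmm_JT] at h1
  -- h0 : det Mmm * ε = det A0 = ε * det vand = Δ
  have hMε : (Mmm a).det * ε = ε * (Matrix.vandermonde a).det := by rw [h0, hA0]
  rw [hJT]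
  rw [show (Matrix.of fun i j : Fin N => a i ^ (lam (j : ℕ) + (N - 1 - (j : ℕ)))) =
    Matrix.of (fun j j' : Fin N => a j ^ ((fun j' : Fin N => lam (j' : ℕ) + (N - 1 - (j' : ℕ))) j')) from rfl]
  rw [← h1, hΔ, ← hMε]
  rw [det_JT_pad a lam hℓN hlam0]
  ring
end
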